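/- Let A be a continuous adapted process such that [A, N] = 0 for every continuous (𝓕_s)-local martingale N, and let τ be a bounded stopping time. Then the stopped process A^τ, defined by A^τ_s = A_{s∧τ}, also satisfies [A^τ, N] = 0 for every continuous (𝓕_s)-local martingale N; i.e., the class of weak zero energy processes is stable under stopping. -/

import Mathlib

open MeasureTheory Filter Topology Set

noncomputable section

variable {Ω : Type*} {mΩ : MeasurableSpace Ω}

/-- Uniform convergence in probability on compact time intervals `[0, t]`, along a filter `l`. -/
def UCP {ι : Type*} (P : Measure Ω) (l : Filter ι)
    (X : ι → ℝ → Ω → ℝ) (Y : ℝ → Ω → ℝ) : Prop :=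
  ∀ t : ℝ, 0 ≤ t → ∀ δ : ℝ, 0 < δ →
    Tendsto (fun i => P {ω | ∃ s ∈ Set.Icc (0 : ℝ) t, δ < |X i s ω - Y s ω|}) l (𝓝 0)

/-- `C` is the covariation `[X, Y]` in the sense of regularization: the u.c.p. limit as
`ε → 0⁺` of `s ↦ (1/ε) ∫₀^s (X_{r+ε} - X_r)(Y_{r+ε} - Y_r) dr`. -/
def HasCovariation (P : Measure Ω) (X Y C : ℝ → Ω → ℝ) : Prop :=
  UCP P (𝓝[>] (0 : ℝ))
    (fun ε s ω => ε⁻¹ * ∫ r in (0 : ℝ)..s, (X (r + ε) ω - X r ω) * (Y (r + ε) ω - Y r ω)) C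

/-- A process with continuous paths. -/
def ContProcess (X : ℝ → Ω → ℝ) : Prop := ∀ ω, Continuous fun s => X s ω

/-- A continuous `(𝓕_s)`-local martingale: a continuous adapted process `M` for which there
exist stopping times `τ_k` increasing a.s. to `+∞` such that each stopped process
`s ↦ M_{s ∧ τ_k}` is an `(𝓕_s)`-martingale. -/
def IsContLocalMartingale (𝓕 : Filtration ℝ mΩ) (P : Measure Ω) (M : ℝ → Ω → ℝ) : Prop :=
  ContProcess M ∧ Adapted 𝓕 M ∧
  ∃ τ : ℕ → Ω → ℝ,
    (∀ k, IsStoppingTime 𝓕 (fun ω => ((τ k ω : ℝ) : WithTop ℝ))) ∧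
    (∀ᵐ ω ∂P, (Monotone fun k => τ k ω) ∧ Tendsto (fun k => τ k ω) atTop atTop) ∧
    (∀ k, Martingale (fun s ω => M (min s (τ k ω)) ω) 𝓕 P)

/-- Rational approximation inside a compact interval. -/
private lemma ratApprox {T x : ℝ} (hx : x ∈ Set.Icc (0:ℝ) T) {η : ℝ} (hη : 0 < η) :
    ∃ q : ℚ, (q : ℝ) ∈ Set.Icc (0:ℝ) T ∧ |(q : ℝ) - x| < η := by
  obtain ⟨hx0, hxT⟩ := hx
  rcases eq_or_lt_of_le (hx0.trans hxT) with hT | hT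
  · have hxe : x = 0 := le_antisymm (hxT.trans hT.symm.le) hx0
    exact ⟨0, ⟨by norm_num, by norm_num [← hT]⟩, by simp [hxe, hη]⟩
  · have h1 : max 0 (x - η) < min T (x + η) := by
      rw [max_lt_iff, lt_min_iff, lt_min_iff]
      refine ⟨⟨hT, by linarith⟩, ⟨by linarith, by linarith⟩⟩
    obtain ⟨q, hq1, hq2⟩ := exists_rat_btwn h1
    refine ⟨q, ⟨le_trans (le_max_left _ _) hq1.le, hq2.le.trans (min_le_left _ _)⟩, ?_⟩
    rw [abs_lt]
    constructor
    · have := (le_max_right 0 (x - η)).trans_lt hq1; linarith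
    · have := hq2.trans_le (min_le_right _ _); linarith

set_option maxHeartbeats 1000000 in
/-- the class of weak zero energy processes is stable under stopping.  If `A` is a
continuous adapted process with `[A, N] = 0` for every continuous local martingale `N`, and `τ`
is a bounded stopping time, then the stopped process `A^τ` also satisfies `[A^τ, N] = 0` for
every continuous local martingale `N`. -/
theorem statement_9 (P : Measure Ω) [IsProbabilityMeasure P] (𝓕 : Filtration ℝ mΩ)
    (A : ℝ → Ω → ℝ)
    (hAc : ContProcess A) (hAad : Adapted 𝓕 A)
    (hAorth : ∀ N, IsContLocalMartingale 𝓕 P N →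
      HasCovariation P A N (fun _ _ => (0 : ℝ)))
    (τ : Ω → ℝ) (hτ : IsStoppingTime 𝓕 (fun ω => ((τ ω : ℝ) : WithTop ℝ)))
    (hτ0 : ∀ ω, 0 ≤ τ ω) (hτbdd : ∃ c : ℝ, ∀ ω, τ ω ≤ c) :
    ∀ N, IsContLocalMartingale 𝓕 P N →
      HasCovariation P (fun s ω => A (min s (τ ω)) ω) N (fun _ _ => (0 : ℝ)) := by
  intro N hN
  have hI := hAorth N hN
  obtain ⟨hNc, hNad, -⟩ := hN
  intro t ht δ hδ
  obtain ⟨c, hc⟩ := hτbdd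
  set T : ℝ := max (t + 1) c with hTdef
  have hT1 : t + 1 ≤ T := le_max_left _ _
  have hTc : c ≤ T := le_max_right _ _
  have hT0 : (0:ℝ) ≤ T := le_trans (by linarith) hT1
  have hAm : ∀ s : ℝ, Measurable (A s) :=
    fun s => (hAad s).mono (𝓕.le s) le_rfl
  have hNm : ∀ s : ℝ, Measurable (N s) :=
    fun s => (hNad s).mono (𝓕.le s) le_rfl
  -- the "bad" sets coming from oscillations of A and N over [0, T]
  set Bad : ℝ → Set Ω := fun ε =>
    ⋃ (p : ℚ) (q : ℚ) (p' : ℚ) (q' : ℚ)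
      (_ : (p:ℝ) ∈ Icc (0:ℝ) T ∧ (q:ℝ) ∈ Icc (0:ℝ) T ∧ (p':ℝ) ∈ Icc (0:ℝ) T ∧
        (q':ℝ) ∈ Icc (0:ℝ) T ∧ |(p:ℝ) - (q:ℝ)| ≤ 2*ε ∧ |(p':ℝ) - (q':ℝ)| ≤ 2*ε),
      {ω | δ/2 < |A (p:ℝ) ω - A (q:ℝ) ω| * |N (p':ℝ) ω - N (q':ℝ) ω|} with hBadDef
  have hBadMeas : ∀ ε : ℝ, MeasurableSet (Bad ε) := by
    intro ε
    refine MeasurableSet.iUnion fun p => MeasurableSet.iUnion fun q =>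
      MeasurableSet.iUnion fun p' => MeasurableSet.iUnion fun q' =>
      MeasurableSet.iUnion fun _ => ?_
    exact measurableSet_lt measurable_const
      ((((hAm p).sub (hAm q)).abs.mul (((hNm p').sub (hNm q')).abs)))
  have hBadMono : ∀ {ε₁ ε₂ : ℝ}, ε₁ ≤ ε₂ → Bad ε₁ ⊆ Bad ε₂ := by
    intro ε₁ ε₂ h ω hω
    simp only [hBadDef, mem_iUnion, mem_setOf_eq] at hω ⊢
    obtain ⟨p, q, p', q', ⟨h1, h2, h3, h4, h5, h6⟩, hm⟩ := hω
    exact ⟨p, q, p', q', ⟨h1, h2, h3, h4, h5.trans (by linarith), h6.trans (by linarith)⟩, hm⟩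
  have hBadEmpty : (⋂ n : ℕ, Bad (1/((n:ℝ)+1))) = ∅ := by
    rw [eq_empty_iff_forall_notMem]
    intro ω hω
    -- a bound for |N · ω| on [0, T]
    obtain ⟨rN, hrN, hmaxN⟩ := isCompact_Icc.exists_isMaxOn (⟨0, le_refl _, hT0⟩ :
        (Icc (0:ℝ) T).Nonempty) ((hNc ω).abs.continuousOn :
        ContinuousOn (fun x => |N x ω|) (Icc 0 T))
    set M : ℝ := |N rN ω| with hMdef
    have hM0 : 0 ≤ M := abs_nonneg _
    have hε' : 0 < δ/2 / (2*M+1) := by positivity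
    obtain ⟨θ, hθ0, hθ⟩ := Metric.uniformContinuousOn_iff.mp
      (isCompact_Icc.uniformContinuousOn_of_continuous ((hAc ω).continuousOn :
        ContinuousOn (fun x => A x ω) (Icc 0 T))) (δ/2 / (2*M+1)) hε'
    obtain ⟨n, hn⟩ := exists_nat_one_div_lt (show (0:ℝ) < θ/2 by linarith)
    have hωn := mem_iInter.mp hω n
    simp only [hBadDef, mem_iUnion, mem_setOf_eq] at hωn
    obtain ⟨p, q, p', q', ⟨h1, h2, h3, h4, h5, h6⟩, hm⟩ := hωn
    have hA : |A (p:ℝ) ω - A (q:ℝ) ω| < δ/2 / (2*M+1) := by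
      have := hθ (p:ℝ) h1 (q:ℝ) h2 (by
        rw [Real.dist_eq]
        calc |(p:ℝ) - (q:ℝ)| ≤ 2 * (1/((n:ℝ)+1)) := h5
        _ < θ := by linarith)
      rwa [Real.dist_eq] at this
    have hNb : |N (p':ℝ) ω - N (q':ℝ) ω| ≤ 2*M := by
      have b1 : |N (p':ℝ) ω| ≤ M := hmaxN h3
      have b2 : |N (q':ℝ) ω| ≤ M := hmaxN h4
      calc |N (p':ℝ) ω - N (q':ℝ) ω| ≤ |N (p':ℝ) ω| + |N (q':ℝ) ω| := abs_sub _ _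
      _ ≤ 2*M := by linarith
    have hprod : |A (p:ℝ) ω - A (q:ℝ) ω| * |N (p':ℝ) ω - N (q':ℝ) ω| ≤
        (δ/2 / (2*M+1)) * (2*M) :=
      mul_le_mul hA.le hNb (abs_nonneg _) hε'.le
    have heq : (δ/2 / (2*M+1)) * (2*M+1) = δ/2 := div_mul_cancel₀ _ (by positivity)
    nlinarith [hm, hε']
  have hBadT : Tendsto (fun ε => P (Bad ε)) (𝓝[>] (0:ℝ)) (𝓝 0) := by
    have hanti : Antitone (fun n : ℕ => Bad (1/((n:ℝ)+1))) := by
      intro m n hmn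
      apply hBadMono
      apply one_div_le_one_div_of_le (by positivity)
      have : (m:ℝ) ≤ n := Nat.cast_le.mpr hmn
      linarith
    have hseq : Tendsto (fun n : ℕ => P (Bad (1/((n:ℝ)+1)))) atTop (𝓝 0) := by
      have h := tendsto_measure_iInter_atTop (μ := P)
        (fun n => (hBadMeas _).nullMeasurableSet) hanti ⟨0, measure_ne_top _ _⟩
      rwa [hBadEmpty, measure_empty] at h
    rw [ENNReal.tendsto_nhds_zero]
    intro η hη
    obtain ⟨n, hn⟩ := (hseq.eventually_lt_const hη).exists
    filter_upwards [Ioc_mem_nhdsGT_of_mem (⟨le_refl (0:ℝ), by positivity⟩ :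
      (0:ℝ) ∈ Ico (0:ℝ) (1/((n:ℝ)+1)))] with ε hε
    exact le_trans (measure_mono (hBadMono hε.2)) hn.le
  -- the key pathwise inclusion
  have key : ∀ ε : ℝ, ε ∈ Ioc (0:ℝ) 1 →
      {ω | ∃ s ∈ Icc (0:ℝ) t, δ < |ε⁻¹ * (∫ r in (0:ℝ)..s,
          (A (min (r + ε) (τ ω)) ω - A (min r (τ ω)) ω) * (N (r + ε) ω - N r ω)) - 0|} ⊆
      {ω | ∃ s ∈ Icc (0:ℝ) t, δ/2 < |ε⁻¹ * (∫ r in (0:ℝ)..s,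
          (A (r + ε) ω - A r ω) * (N (r + ε) ω - N r ω)) - 0|} ∪ Bad ε := by
    rintro ε ⟨hε0, hε1⟩ ω hωmem
    obtain ⟨s, ⟨hs0, hst⟩, hJ⟩ := hωmem
    rw [sub_zero] at hJ
    set τω := τ ω with hτωdef
    have hτω0 : 0 ≤ τω := hτ0 ω
    have hτωT : τω ≤ T := (hc ω).trans hTc
    set g : ℝ → ℝ := fun r => (A (min (r + ε) τω) ω - A (min r τω) ω) * (N (r + ε) ω - N r ω)
      with hgdef
    set h : ℝ → ℝ := fun r => (A (r + ε) ω - A r ω) * (N (r + ε) ω - N r ω) with hhdef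
    have hgc : Continuous g := by
      apply Continuous.mul
      · exact ((hAc ω).comp ((continuous_id.add continuous_const).min continuous_const)).sub
          ((hAc ω).comp (continuous_id.min continuous_const))
      · exact ((hNc ω).comp (continuous_id.add continuous_const)).sub (hNc ω)
    have hhc : Continuous h := by
      apply Continuous.mul
      · exact ((hAc ω).comp (continuous_id.add continuous_const)).sub (hAc ω)
      · exact ((hNc ω).comp (continuous_id.add continuous_const)).sub (hNc ω)
    set u : ℝ := min s (max 0 (τω - ε)) with hudef
    set v : ℝ := min s τω with hvdef
    have hu0 : 0 ≤ u := le_min hs0 (le_max_left _ _)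
    have huv : u ≤ v := min_le_min le_rfl (max_le hτω0 (by linarith))
    have hvs : v ≤ s := min_le_left _ _
    have hut : u ≤ t := le_trans (min_le_left _ _) hst
    have hvu : v - u ≤ ε := by
      have h1 : v ≤ min s (max 0 (τω - ε) + ε) := by
        refine le_min (min_le_left _ _) ?_
        calc v ≤ τω := min_le_right _ _
        _ ≤ max 0 (τω - ε) + ε := by have := le_max_right 0 (τω - ε); linarith
      have h2 : min s (max 0 (τω - ε) + ε) ≤ u + ε := by
        rcases le_total s (max 0 (τω - ε)) with h' | h'
        · rw [hudef, min_eq_left h']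
          exact le_trans (min_le_left _ _) (by linarith)
        · rw [hudef, min_eq_right h']
          exact min_le_right _ _
      linarith
    have hint : ∀ a b : ℝ, IntervalIntegrable g MeasureTheory.volume a b :=
      fun a b => hgc.intervalIntegrable a b
    have hinth : ∀ a b : ℝ, IntervalIntegrable h MeasureTheory.volume a b :=
      fun a b => hhc.intervalIntegrable a b
    have hsplit : (∫ r in (0:ℝ)..s, g r) = (∫ r in (0:ℝ)..u, h r) + ∫ r in u..v, g r := by
      have e1 : (∫ r in (0:ℝ)..v, g r) + ∫ r in v..s, g r = ∫ r in (0:ℝ)..s, g r :=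
        intervalIntegral.integral_add_adjacent_intervals (hint 0 v) (hint v s)
      have e2 : (∫ r in (0:ℝ)..u, g r) + ∫ r in u..v, g r = ∫ r in (0:ℝ)..v, g r :=
        intervalIntegral.integral_add_adjacent_intervals (hint 0 u) (hint u v)
      have e3 : (∫ r in v..s, g r) = 0 := by
        rcases le_total τω s with h' | h'
        · have hveq : v = τω := min_eq_right h'
          have : (∫ r in v..s, g r) = ∫ r in v..s, (0:ℝ) := by
            apply intervalIntegral.integral_congr
            intro r hr
            rw [Set.uIcc_of_le hvs] at hr
            have hτr : τω ≤ r := hveq ▸ hr.1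
            simp only [hgdef, min_eq_right hτr, min_eq_right (by linarith : τω ≤ r + ε)]
            ring
          rw [this, intervalIntegral.integral_zero]
        · have hveq : v = s := min_eq_left h'
          rw [hveq, intervalIntegral.integral_same]
      have e4 : (∫ r in (0:ℝ)..u, g r) = ∫ r in (0:ℝ)..u, h r := by
        rcases le_or_gt ε τω with h' | h'
        · apply intervalIntegral.integral_congr
          intro r hr
          rw [Set.uIcc_of_le hu0] at hr
          have hru : r ≤ max 0 (τω - ε) := hr.2.trans (min_le_right _ _)
          rw [max_eq_right (by linarith : (0:ℝ) ≤ τω - ε)] at hru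
          simp only [hgdef, hhdef, min_eq_left (by linarith : r + ε ≤ τω),
            min_eq_left (by linarith : r ≤ τω)]
        · have hu0' : u = 0 := by
            rw [hudef, max_eq_left (by linarith : τω - ε ≤ 0), min_eq_right hs0]
          rw [hu0', intervalIntegral.integral_same, intervalIntegral.integral_same]
      rw [← e1, ← e2, e3, e4]
      ring
    by_cases hIsmall : δ/2 < |ε⁻¹ * ∫ r in (0:ℝ)..u, h r|
    · left
      exact ⟨u, ⟨hu0, hut⟩, by rwa [sub_zero]⟩
    · right
      push_neg at hIsmall
      have hR : δ/2 < |ε⁻¹ * ∫ r in u..v, g r| := by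
      -- triangle inequality
        have htri : |ε⁻¹ * ∫ r in (0:ℝ)..s, g r| ≤
            |ε⁻¹ * ∫ r in (0:ℝ)..u, h r| + |ε⁻¹ * ∫ r in u..v, g r| := by
          rw [hsplit, mul_add]
          exact abs_add_le _ _
        linarith
      obtain ⟨r₀, hr₀, hmax⟩ := isCompact_Icc.exists_isMaxOn
        (Set.nonempty_Icc.mpr huv) (hgc.abs.continuousOn :
          ContinuousOn (fun r => |g r|) (Icc u v))
      have hbound : |∫ r in u..v, g r| ≤ |g r₀| * (v - u) := by
        have hb := intervalIntegral.norm_integral_le_of_norm_le_const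
          (C := |g r₀|) (f := g) (a := u) (b := v) ?_
        · rwa [Real.norm_eq_abs, abs_of_nonneg (by linarith : (0:ℝ) ≤ v - u)] at hb
        · intro x hx
          rw [Set.uIoc_of_le huv] at hx
          rw [Real.norm_eq_abs]
          exact hmax ⟨hx.1.le, hx.2⟩
      have hgr₀ : δ/2 < |g r₀| := by
        have h1 : |ε⁻¹ * ∫ r in u..v, g r| ≤ |g r₀| * (ε⁻¹ * (v - u)) := by
          rw [abs_mul, abs_of_nonneg (by positivity : (0:ℝ) ≤ ε⁻¹)]
          calc ε⁻¹ * |∫ r in u..v, g r| ≤ ε⁻¹ * (|g r₀| * (v - u)) :=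
            mul_le_mul_of_nonneg_left hbound (by positivity)
          _ = |g r₀| * (ε⁻¹ * (v - u)) := by ring
        have h2 : ε⁻¹ * (v - u) ≤ 1 := by
          rw [inv_mul_le_iff₀ hε0]
          linarith
        have h3 : 0 ≤ ε⁻¹ * (v - u) := mul_nonneg (by positivity) (by linarith)
        nlinarith [abs_nonneg (g r₀)]
      set x : ℝ := min (r₀ + ε) τω with hxdef
      set y : ℝ := min r₀ τω with hydef
      have hr₀0 : 0 ≤ r₀ := le_trans hu0 hr₀.1
      have hr₀t : r₀ ≤ t := le_trans hr₀.2 (le_trans hvs hst)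
      have hxI : x ∈ Icc (0:ℝ) T := ⟨le_min (by linarith) hτω0, (min_le_right _ _).trans hτωT⟩
      have hyI : y ∈ Icc (0:ℝ) T := ⟨le_min hr₀0 hτω0, (min_le_right _ _).trans hτωT⟩
      have hx'I : (r₀ + ε) ∈ Icc (0:ℝ) T := ⟨by linarith, by linarith⟩
      have hy'I : r₀ ∈ Icc (0:ℝ) T := ⟨hr₀0, by linarith⟩
      have hxy : |x - y| ≤ ε := by
        have hyx : y ≤ x := min_le_min (by linarith) le_rfl
        have hxyε : x ≤ y + ε := by
          calc x ≤ min (r₀ + ε) (τω + ε) := min_le_min le_rfl (by linarith)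
          _ = y + ε := min_add_add_right _ _ _
        rw [abs_le]
        constructor <;> linarith
      have hab : δ/2 < |A x ω - A y ω| * |N (r₀ + ε) ω - N r₀ ω| := by
        rw [hgdef] at hgr₀
        simp only at hgr₀
        rwa [abs_mul] at hgr₀
      set a : ℝ := |A x ω - A y ω| with hadef
      set b : ℝ := |N (r₀ + ε) ω - N r₀ ω| with hbdef
      have habsa : 0 ≤ a := by rw [hadef]; exact abs_nonneg _
      have habsb : 0 ≤ b := by rw [hbdef]; exact abs_nonneg _
      have hab0 : 0 < a * b := lt_trans (by linarith) hab
      obtain ⟨ha0, hb0⟩ : 0 < a ∧ 0 < b := by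
        rcases mul_pos_iff.mp hab0 with h | ⟨h1, h2⟩
        · exact h
        · exact absurd h1 (not_lt.mpr habsa)
      set ι : ℝ := min (a/4) (min (b/4) ((a*b - δ/2)/(4*(a+b)))) with hιdef
      have hι0 : 0 < ι := by
        refine lt_min (by linarith) (lt_min (by linarith) ?_)
        have : 0 < a*b - δ/2 := by linarith
        positivity
      have hιa : ι ≤ a/4 := min_le_left _ _
      have hιb : ι ≤ b/4 := le_trans (min_le_right _ _) (min_le_left _ _)
      have hικ : ι ≤ (a*b - δ/2)/(4*(a+b)) := le_trans (min_le_right _ _) (min_le_right _ _)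
      have hprodι : δ/2 < (a - 2*ι) * (b - 2*ι) := by
        have hκ : ι * (4*(a+b)) ≤ a*b - δ/2 := by
          rw [← div_mul_cancel₀ (a*b - δ/2) (show (4*(a+b)) ≠ 0 by positivity)]
          exact mul_le_mul_of_nonneg_right hικ (by positivity)
        nlinarith [sq_nonneg ι]
      -- moduli of continuity at the four points
      obtain ⟨θ₁, hθ₁0, hθ₁⟩ := Metric.continuous_iff.mp (hAc ω) x ι hι0
      obtain ⟨θ₂, hθ₂0, hθ₂⟩ := Metric.continuous_iff.mp (hAc ω) y ι hι0
      obtain ⟨θ₃, hθ₃0, hθ₃⟩ := Metric.continuous_iff.mp (hNc ω) (r₀ + ε) ι hι0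
      obtain ⟨θ₄, hθ₄0, hθ₄⟩ := Metric.continuous_iff.mp (hNc ω) r₀ ι hι0
      obtain ⟨p, hpI, hpx⟩ := ratApprox hxI (lt_min hθ₁0 (by linarith : (0:ℝ) < ε/2))
      obtain ⟨q, hqI, hqy⟩ := ratApprox hyI (lt_min hθ₂0 (by linarith : (0:ℝ) < ε/2))
      obtain ⟨p', hp'I, hp'x⟩ := ratApprox hx'I (lt_min hθ₃0 (by linarith : (0:ℝ) < ε/2))
      obtain ⟨q', hq'I, hq'y⟩ := ratApprox hy'I (lt_min hθ₄0 (by linarith : (0:ℝ) < ε/2))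
      have hpx1 : |(p:ℝ) - x| < θ₁ := lt_of_lt_of_le hpx (min_le_left _ _)
      have hpx2 : |(p:ℝ) - x| < ε/2 := lt_of_lt_of_le hpx (min_le_right _ _)
      have hqy1 : |(q:ℝ) - y| < θ₂ := lt_of_lt_of_le hqy (min_le_left _ _)
      have hqy2 : |(q:ℝ) - y| < ε/2 := lt_of_lt_of_le hqy (min_le_right _ _)
      have hp'1 : |(p':ℝ) - (r₀ + ε)| < θ₃ := lt_of_lt_of_le hp'x (min_le_left _ _)
      have hp'2 : |(p':ℝ) - (r₀ + ε)| < ε/2 := lt_of_lt_of_le hp'x (min_le_right _ _)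
      have hq'1 : |(q':ℝ) - r₀| < θ₄ := lt_of_lt_of_le hq'y (min_le_left _ _)
      have hq'2 : |(q':ℝ) - r₀| < ε/2 := lt_of_lt_of_le hq'y (min_le_right _ _)
      have hAp : |A (p:ℝ) ω - A x ω| < ι := by
        have := hθ₁ (p:ℝ) (by rwa [Real.dist_eq]); rwa [Real.dist_eq] at this
      have hAq : |A (q:ℝ) ω - A y ω| < ι := by
        have := hθ₂ (q:ℝ) (by rwa [Real.dist_eq]); rwa [Real.dist_eq] at this
      have hNp : |N (p':ℝ) ω - N (r₀ + ε) ω| < ι := by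
        have := hθ₃ (p':ℝ) (by rwa [Real.dist_eq]); rwa [Real.dist_eq] at this
      have hNq : |N (q':ℝ) ω - N r₀ ω| < ι := by
        have := hθ₄ (q':ℝ) (by rwa [Real.dist_eq]); rwa [Real.dist_eq] at this
      -- gap conditions
      have hpq : |(p:ℝ) - (q:ℝ)| ≤ 2*ε := by
        obtain ⟨hx1, hx2⟩ := abs_lt.mp hpx2
        obtain ⟨hy1, hy2⟩ := abs_lt.mp hqy2
        obtain ⟨hxy1, hxy2⟩ := abs_le.mp hxy
        rw [abs_le]
        constructor <;> linarith
      have hp'q' : |(p':ℝ) - (q':ℝ)| ≤ 2*ε := by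
        obtain ⟨hx1, hx2⟩ := abs_lt.mp hp'2
        obtain ⟨hy1, hy2⟩ := abs_lt.mp hq'2
        rw [abs_le]
        constructor <;> linarith
      -- the product stays large
      have hA2 : a - 2*ι ≤ |A (p:ℝ) ω - A (q:ℝ) ω| := by
        have hdecomp : A x ω - A y ω =
            (A x ω - A (p:ℝ) ω) + ((A (p:ℝ) ω - A (q:ℝ) ω) + (A (q:ℝ) ω - A y ω)) := by ring
        have h1 : a ≤ |A x ω - A (p:ℝ) ω| + (|A (p:ℝ) ω - A (q:ℝ) ω| + |A (q:ℝ) ω - A y ω|) := by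
          rw [hadef, hdecomp]
          exact le_trans (abs_add_le _ _) (by gcongr; exact abs_add_le _ _)
        rw [abs_sub_comm (A x ω) (A (p:ℝ) ω)] at h1
        linarith
      have hN2 : b - 2*ι ≤ |N (p':ℝ) ω - N (q':ℝ) ω| := by
        have hdecomp : N (r₀ + ε) ω - N r₀ ω =
            (N (r₀ + ε) ω - N (p':ℝ) ω) + ((N (p':ℝ) ω - N (q':ℝ) ω) + (N (q':ℝ) ω - N r₀ ω)) := by
          ring
        have h1 : b ≤ |N (r₀ + ε) ω - N (p':ℝ) ω| +
            (|N (p':ℝ) ω - N (q':ℝ) ω| + |N (q':ℝ) ω - N r₀ ω|) := by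
          rw [hbdef, hdecomp]
          exact le_trans (abs_add_le _ _) (by gcongr; exact abs_add_le _ _)
        rw [abs_sub_comm (N (r₀ + ε) ω) (N (p':ℝ) ω)] at h1
        linarith
      have hfinal : δ/2 < |A (p:ℝ) ω - A (q:ℝ) ω| * |N (p':ℝ) ω - N (q':ℝ) ω| := by
        have hc1 : 0 < a - 2*ι := by linarith
        have hc2 : 0 < b - 2*ι := by linarith
        calc δ/2 < (a - 2*ι) * (b - 2*ι) := hprodι
        _ ≤ |A (p:ℝ) ω - A (q:ℝ) ω| * |N (p':ℝ) ω - N (q':ℝ) ω| :=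
          mul_le_mul hA2 hN2 hc2.le (abs_nonneg _)
      simp only [hBadDef, mem_iUnion, mem_setOf_eq]
      exact ⟨p, q, p', q', ⟨hpI, hqI, hp'I, hq'I, hpq, hp'q'⟩, hfinal⟩
  -- conclusion
  have hIt := hI t ht (δ/2) (half_pos hδ)
  have hupper : Tendsto (fun ε : ℝ =>
      P {ω | ∃ s ∈ Icc (0:ℝ) t, δ/2 < |ε⁻¹ * (∫ r in (0:ℝ)..s,
        (A (r + ε) ω - A r ω) * (N (r + ε) ω - N r ω)) - 0|} + P (Bad ε))
      (𝓝[>] (0:ℝ)) (𝓝 0) := by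
    have := Filter.Tendsto.add hIt hBadT
    simpa using this
  refine tendsto_of_tendsto_of_tendsto_of_le_of_le' tendsto_const_nhds hupper
    (Eventually.of_forall fun ε => zero_le) ?_
  filter_upwards [Ioc_mem_nhdsGT_of_mem (⟨le_refl (0:ℝ), one_pos⟩ :
    (0:ℝ) ∈ Ico (0:ℝ) 1)] with ε hε
  calc P {ω | ∃ s ∈ Icc (0:ℝ) t, δ < |ε⁻¹ * (∫ r in (0:ℝ)..s,
        (A (min (r + ε) (τ ω)) ω - A (min r (τ ω)) ω) * (N (r + ε) ω - N r ω)) - 0|}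
      ≤ P ({ω | ∃ s ∈ Icc (0:ℝ) t, δ/2 < |ε⁻¹ * (∫ r in (0:ℝ)..s,
        (A (r + ε) ω - A r ω) * (N (r + ε) ω - N r ω)) - 0|} ∪ Bad ε) :=
        measure_mono (key ε hε)
  _ ≤ _ := measure_union_le _ _
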